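/- Consider the 4-dimensional VASS A = (Q,T) with Q = {q_1,q_2,q_3,q_4} and T = {(q_1,(−1,1,0,0),q_2), (q_2,(0,1,0,0),q_1), (q_1,(0,0,0,0),q_3), (q_3,(0,0,−1,0),q_1), (q_3,(1,−1,0,0),q_3), (q_1,(0,0,0,0),q_4), (q_4,(0,0,0,−1),q_1), (q_4,(1,−1,1,0),q_4)}. Then A satisfies condition (D) and its termination complexity is non-elementary: defining the tower function by Tow(0,m) = m and Tow(k+1,m) = 2^{Tow(k,m)}, for all sufficiently large n there is a zero-avoiding computation initiated in q_1(n,n,n,n) of length at least n · Tow(n,n); in particular 𝓛(n) ≥ n · Tow(n,n) for all sufficiently large n. -/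

import Mathlib

open scoped BigOperators ENNReal

/-- A `d`-dimensional VASS: a set of states `Q` together with transitions
labelled by vectors in `{-1,0,1}^d`. -/
structure VASS (d : ℕ) (Q : Type) where
  T : Set (Q × (Fin d → ℤ) × Q)
  upd_mem : ∀ t ∈ T, ∀ i, t.2.1 i = -1 ∨ t.2.1 i = 0 ∨ t.2.1 i = 1

namespace VASS

variable {d : ℕ} {Q : Type}

/-- Scalar product of an integer vector with a real vector. -/
def dotZ (v : Fin d → ℤ) (w : Fin d → ℝ) : ℝ := ∑ i, (v i : ℝ) * w i

/-- Scalar product of two real vectors. -/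
def dotR (v w : Fin d → ℝ) : ℝ := ∑ i, v i * w i

/-- `A.IsPath n p u` : `p 0, u 0, p 1, u 1, …, u (n-1), p n` is a finite path
of length `n ≥ 1` in `A`. -/
def IsPath (A : VASS d Q) (n : ℕ) (p : ℕ → Q) (u : ℕ → Fin d → ℤ) : Prop :=
  1 ≤ n ∧ ∀ i < n, (p i, u i, p (i + 1)) ∈ A.T

/-- Effect of a path of length `n` with update vectors `u`. -/
def eff (n : ℕ) (u : ℕ → Fin d → ℤ) : Fin d → ℤ :=
  fun i => ∑ j ∈ Finset.range n, u j i

/-- A short cycle: a cycle of length at most `|Q|`. -/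
def IsShortCycle (A : VASS d Q) (n : ℕ) (p : ℕ → Q) (u : ℕ → Fin d → ℤ) : Prop :=
  A.IsPath n p u ∧ p n = p 0 ∧ n ≤ Nat.card Q

/-- `Inc A` : the set of effects of short cycles of `A`. -/
def Inc (A : VASS d Q) : Set (Fin d → ℤ) :=
  { v | ∃ n p u, A.IsShortCycle n p u ∧ v = eff n u }

/-- A zero-avoiding computation of length `n` : all configurations have all
counters positive and consecutive configurations are related by transitions. -/
def IsZeroAvoiding (A : VASS d Q) (n : ℕ) (q : ℕ → Q) (z : ℕ → Fin d → ℕ) : Prop :=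
  (∀ i ≤ n, ∀ j, 0 < z i j) ∧
  ∀ i < n, (q i, fun j => (z (i + 1) j : ℤ) - (z i j : ℤ), q (i + 1)) ∈ A.T

/-- `L(pv)` : the least bound on the length of zero-avoiding computations
initiated in the configuration `p v`. -/
noncomputable def Lval (A : VASS d Q) (p : Q) (v : Fin d → ℕ) : ℕ∞ :=
  ⨆ (n : ℕ) (_ : ∃ q z, q 0 = p ∧ z 0 = v ∧ A.IsZeroAvoiding n q z), (n : ℕ∞)

/-- Termination complexity `𝓛(n)` : the max of `L(pv)` over configurations of size `n`. -/
noncomputable def L (A : VASS d Q) (n : ℕ) : ℕ∞ :=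
  ⨆ (p : Q) (v : Fin d → ℕ) (_ : Finset.univ.sup v = n), A.Lval p v

/-- The set of normals of `A`: nonzero vectors `nv` with `v · nv ≤ 0` for all `v ∈ Inc A`. -/
def Normals (A : VASS d Q) : Set (Fin d → ℝ) :=
  { nv | nv ≠ 0 ∧ ∀ v ∈ A.Inc, dotZ v nv ≤ 0 }

/-- The cone (over ℝ) generated by a set of integer vectors. -/
def coneZ (V : Set (Fin d → ℤ)) : Set (Fin d → ℝ) :=
  { x | ∃ (k : ℕ) (a : Fin k → ℝ) (v : Fin k → Fin d → ℤ),
      (∀ j, 0 ≤ a j) ∧ (∀ j, v j ∈ V) ∧ x = ∑ j, a j • (fun i => ((v j i : ℝ))) }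

/-- A good normal: a positive normal such that for every `v ∈ cone(Inc A)`,
`-v ∈ cone(Inc A)` iff `v · n = 0`. -/
def IsGoodNormal (A : VASS d Q) (nv : Fin d → ℝ) : Prop :=
  nv ∈ A.Normals ∧ (∀ i, 0 < nv i) ∧
  ∀ x ∈ coneZ A.Inc, (-x ∈ coneZ A.Inc ↔ dotR x nv = 0)

/-- `A.Reaches p q` : there is a finite path from `p` to `q`. -/
def Reaches (A : VASS d Q) (p q : Q) : Prop :=
  ∃ n pp u, A.IsPath n pp u ∧ pp 0 = p ∧ pp n = q

/-- A strongly connected component: a maximal set of states pairwise connected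
by finite paths. -/
def IsSCC (A : VASS d Q) (R : Set Q) : Prop :=
  (∀ p ∈ R, ∀ q ∈ R, p ≠ q → A.Reaches p q) ∧
  ∀ S : Set Q, R ⊆ S → (∀ p ∈ S, ∀ q ∈ S, p ≠ q → A.Reaches p q) → S = R

/-- The VASS `A` restricted to the states of `R` and transitions within `R`. -/
def restrict (A : VASS d Q) (R : Set Q) : VASS d R where
  T := { t | ((t.1 : Q), t.2.1, (t.2.2 : Q)) ∈ A.T }
  upd_mem := fun _ ht i => A.upd_mem _ ht i

/-- The VASS `A^nv = (Q, T_nv)` where `T_nv` consists of the transitions of `A`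
contained in some short cycle `γ` with `eff(γ) · nv = 0`. -/
def neutral (A : VASS d Q) (nv : Fin d → ℝ) : VASS d Q where
  T := { t ∈ A.T | ∃ n p u, A.IsShortCycle n p u ∧ dotZ (eff n u) nv = 0 ∧
          ∃ i < n, (p i, u i, p (i + 1)) = t }
  upd_mem := fun t ht i => A.upd_mem t ht.1 i

end VASS

/-- The concrete 4-dimensional VASS of Fig. 6 (states: `q_i` is `i-1 : Fin 4`). -/
def A18 : VASS 4 (Fin 4) where
  T := {(0, ![-1, 1, 0, 0], 1), (1, ![0, 1, 0, 0], 0),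
        (0, ![0, 0, 0, 0], 2), (2, ![0, 0, -1, 0], 0), (2, ![1, -1, 0, 0], 2),
        (0, ![0, 0, 0, 0], 3), (3, ![0, 0, 0, -1], 0), (3, ![1, -1, 1, 0], 3)}
  upd_mem := by
    intro t ht i
    simp only [Set.mem_insert_iff, Set.mem_singleton_iff] at ht
    rcases ht with rfl | rfl | rfl | rfl | rfl | rfl | rfl | rfl <;> fin_cases i <;> simp

/-- The tower function: `Tow 0 m = m` and `Tow (k+1) m = 2 ^ Tow k m`. -/
def Tow : ℕ → ℕ → ℕ
  | 0, m => m
  | k + 1, m => 2 ^ Tow k m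

namespace Stmt18Aux

abbrev Conf := Fin 4 × (Fin 4 → ℕ)

def Step (c c' : Conf) : Prop :=
  (∀ j, 0 < c'.2 j) ∧
  (c.1, (fun j => (c'.2 j : ℤ) - (c.2 j : ℤ)), c'.1) ∈ A18.T

def Run (n : ℕ) (c c' : Conf) : Prop :=
  ∃ f : ℕ → Conf, f 0 = c ∧ f n = c' ∧ ∀ i < n, Step (f i) (f (i + 1))

def Run' (c c' : Conf) : Prop := ∃ n, Run n c c'

lemma Run'.refl (c : Conf) : Run' c c :=
  ⟨0, fun _ => c, rfl, rfl, by omega⟩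

lemma Run'.single {c c' : Conf} (h : Step c c') : Run' c c' := by
  refine ⟨1, fun i => if i = 0 then c else c', rfl, rfl, ?_⟩
  intro i hi
  interval_cases i
  simpa using h

lemma Run'.trans {a b c : Conf} (h1 : Run' a b) (h2 : Run' b c) : Run' a c := by
  obtain ⟨m, f, hf0, hfm, hf⟩ := h1
  obtain ⟨n, g, hg0, hgn, hg⟩ := h2
  refine ⟨m + n, fun i => if i ≤ m then f i else g (i - m), by simp [hf0], ?_, ?_⟩
  · by_cases h : n = 0
    · subst h; simp [hfm, ← hg0, ← hgn]
    · simp only [if_neg (by omega : ¬ m + n ≤ m)]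
      rw [Nat.add_sub_cancel_left, hgn]
  · intro i hi
    by_cases h : i + 1 ≤ m
    · simpa [show i ≤ m by omega, h] using hf i (by omega)
    · by_cases h' : i ≤ m
      · have him : i = m := by omega
        have : g (i + 1 - m) = g ((i - m) + 1) := by congr 1; omega
        simpa [h, h', this, him, hfm, ← hg0] using hg (i - m) (by omega)
      · have : g (i + 1 - m) = g ((i - m) + 1) := by congr 1; omega
        simpa [h, h', this] using hg (i - m) (by omega)

lemma step_counter0 {c c' : Conf} (h : Step c c') : c'.2 0 ≤ c.2 0 + 1 := by
  obtain ⟨-, hm⟩ := h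
  simp only [A18, Set.mem_insert_iff, Set.mem_singleton_iff] at hm
  rcases hm with h | h | h | h | h | h | h | h <;>
    (have h2 := congrArg (fun t => t.2.1 0) h; simp at h2; omega)

lemma run_counter0 {n : ℕ} {c c' : Conf} (h : Run n c c') : c'.2 0 ≤ c.2 0 + n := by
  obtain ⟨f, hf0, hfn, hf⟩ := h
  subst hf0; subst hfn
  induction n with
  | zero => simp
  | succ n ih =>
    have := step_counter0 (hf n (by omega))
    have := ih (fun i hi => hf i (by omega))
    omega

end Stmt18Aux
namespace Stmt18Aux

lemma pos4 {a b c k : ℕ} (ha : 0 < a) (hb : 0 < b) (hc : 0 < c) (hk : 0 < k) :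
    ∀ j, 0 < (![a, b, c, k] : Fin 4 → ℕ) j := by
  intro j; fin_cases j <;> simpa

lemma confEq (q : Fin 4) {a b c k a' b' c' k' : ℕ}
    (h1 : a = a') (h2 : b = b') (h3 : c = c') (h4 : k = k') :
    ((q, ![a, b, c, k]) : Conf) = (q, ![a', b', c', k']) := by
  subst h1; subst h2; subst h3; subst h4; rfl

lemma step1 {a b c k : ℕ} (ha : 0 < a) (hc : 0 < c) (hk : 0 < k) :
    Step (0, ![a + 1, b, c, k]) (1, ![a, b + 1, c, k]) := by
  refine ⟨pos4 ha (by omega) hc hk, ?_⟩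
  simp only [A18, Set.mem_insert_iff, Set.mem_singleton_iff]
  refine Or.inl (Prod.ext rfl (Prod.ext ?_ rfl))
  funext j; fin_cases j <;> simp

lemma step2 {a b c k : ℕ} (ha : 0 < a) (hc : 0 < c) (hk : 0 < k) :
    Step (1, ![a, b, c, k]) (0, ![a, b + 1, c, k]) := by
  refine ⟨pos4 ha (by omega) hc hk, ?_⟩
  simp only [A18, Set.mem_insert_iff, Set.mem_singleton_iff]
  refine Or.inr (Or.inl (Prod.ext rfl (Prod.ext ?_ rfl)))
  funext j; fin_cases j <;> simp

lemma step3 {a b c k : ℕ} (ha : 0 < a) (hb : 0 < b) (hc : 0 < c) (hk : 0 < k) :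
    Step (0, ![a, b, c, k]) (2, ![a, b, c, k]) := by
  refine ⟨pos4 ha hb hc hk, ?_⟩
  simp only [A18, Set.mem_insert_iff, Set.mem_singleton_iff]
  refine Or.inr (Or.inr (Or.inl (Prod.ext rfl (Prod.ext ?_ rfl))))
  funext j; fin_cases j <;> simp

lemma step4 {a b c k : ℕ} (ha : 0 < a) (hb : 0 < b) (hc : 0 < c) (hk : 0 < k) :
    Step (2, ![a, b, c + 1, k]) (0, ![a, b, c, k]) := by
  refine ⟨pos4 ha hb hc hk, ?_⟩
  simp only [A18, Set.mem_insert_iff, Set.mem_singleton_iff]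
  refine Or.inr (Or.inr (Or.inr (Or.inl (Prod.ext rfl (Prod.ext ?_ rfl)))))
  funext j; fin_cases j <;> simp

lemma step5 {a b c k : ℕ} (hb : 0 < b) (hc : 0 < c) (hk : 0 < k) :
    Step (2, ![a, b + 1, c, k]) (2, ![a + 1, b, c, k]) := by
  refine ⟨pos4 (by omega) hb hc hk, ?_⟩
  simp only [A18, Set.mem_insert_iff, Set.mem_singleton_iff]
  refine Or.inr (Or.inr (Or.inr (Or.inr (Or.inl (Prod.ext rfl (Prod.ext ?_ rfl))))))
  funext j; fin_cases j <;> simp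

lemma step6 {a b c k : ℕ} (ha : 0 < a) (hb : 0 < b) (hc : 0 < c) (hk : 0 < k) :
    Step (0, ![a, b, c, k]) (3, ![a, b, c, k]) := by
  refine ⟨pos4 ha hb hc hk, ?_⟩
  simp only [A18, Set.mem_insert_iff, Set.mem_singleton_iff]
  refine Or.inr (Or.inr (Or.inr (Or.inr (Or.inr (Or.inl
    (Prod.ext rfl (Prod.ext ?_ rfl)))))))
  funext j; fin_cases j <;> simp

lemma step7 {a b c k : ℕ} (ha : 0 < a) (hb : 0 < b) (hc : 0 < c) (hk : 0 < k) :
    Step (3, ![a, b, c, k + 1]) (0, ![a, b, c, k]) := by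
  refine ⟨pos4 ha hb hc hk, ?_⟩
  simp only [A18, Set.mem_insert_iff, Set.mem_singleton_iff]
  refine Or.inr (Or.inr (Or.inr (Or.inr (Or.inr (Or.inr (Or.inl
    (Prod.ext rfl (Prod.ext ?_ rfl))))))))
  funext j; fin_cases j <;> simp

lemma step8 {a b c k : ℕ} (hb : 0 < b) (hc : 0 < c) (hk : 0 < k) :
    Step (3, ![a, b + 1, c, k]) (3, ![a + 1, b, c + 1, k]) := by
  refine ⟨pos4 (by omega) hb (by omega) hk, ?_⟩
  simp only [A18, Set.mem_insert_iff, Set.mem_singleton_iff]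
  refine Or.inr (Or.inr (Or.inr (Or.inr (Or.inr (Or.inr (Or.inr
    (Prod.ext rfl (Prod.ext ?_ rfl))))))))
  funext j; fin_cases j <;> simp

end Stmt18Aux
namespace Stmt18Aux

lemma Run'.cast {c1 c2 c1' c2' : Conf} (h : Run' c1 c2) (e1 : c1 = c1') (e2 : c2 = c2') :
    Run' c1' c2' := by subst e1; subst e2; exact h

/-- Doubling loop at q1/q2: m rounds of t1,t2. -/
lemma runL1 : ∀ m a b c k : ℕ, 0 < a → 0 < c → 0 < k →
    Run' (0, ![a + m, b, c, k]) (0, ![a, b + 2 * m, c, k]) := by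
  intro m
  induction m with
  | zero =>
    intro a b c k _ _ _
    exact (Run'.refl _).cast rfl (confEq 0 rfl (by ring) rfl rfl)
  | succ m ih =>
    intro a b c k ha hc hk
    have h1 : Run' (0, ![a + m + 1, b, c, k]) (0, ![a + m, b + 2, c, k]) :=
      (Run'.single (step1 (by omega) hc hk)).trans (Run'.single (step2 (by omega) hc hk))
    have h2 := ih a (b + 2) c k ha hc hk
    exact ((h1.cast (confEq 0 (by ring) rfl rfl rfl) rfl).trans h2).cast rfl
      (confEq 0 rfl (by ring) rfl rfl)

/-- Transfer loop at q3: m iterations of t5. -/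
lemma runL2 : ∀ m a b c k : ℕ, 0 < b → 0 < c → 0 < k →
    Run' (2, ![a, b + m, c, k]) (2, ![a + m, b, c, k]) := by
  intro m
  induction m with
  | zero => intro a b c k _ _ _; exact Run'.refl _
  | succ m ih =>
    intro a b c k hb hc hk
    have h1 : Run' (2, ![a, b + m + 1, c, k]) (2, ![a + 1, b + m, c, k]) :=
      Run'.single (step5 (by omega) hc hk)
    have h2 := ih (a + 1) b c k hb hc hk
    exact ((h1.cast (confEq 2 rfl (by ring) rfl rfl) rfl).trans h2).cast rfl
      (confEq 2 (by ring) rfl rfl rfl)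

/-- Transfer loop at q4: m iterations of t8. -/
lemma runL3 : ∀ m a b c k : ℕ, 0 < b → 0 < c → 0 < k →
    Run' (3, ![a, b + m, c, k]) (3, ![a + m, b, c + m, k]) := by
  intro m
  induction m with
  | zero => intro a b c k _ _ _; exact Run'.refl _
  | succ m ih =>
    intro a b c k hb hc hk
    have h1 : Run' (3, ![a, b + m + 1, c, k]) (3, ![a + 1, b + m, c + 1, k]) :=
      Run'.single (step8 (by omega) hc hk)
    have h2 := ih (a + 1) b (c + 1) k hb (by omega) hk
    exact ((h1.cast (confEq 3 rfl (by ring) rfl rfl) rfl).trans h2).cast rfl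
      (confEq 3 (by ring) rfl (by ring) rfl)

/-- One "double" phase: q1 value a+1 → 2a+1, consuming one unit of counter 3. -/
lemma runDbl (a c k : ℕ) (hc : 0 < c) (hk : 0 < k) :
    Run' (0, ![a + 1, 1, c + 1, k]) (0, ![2 * a + 1, 1, c, k]) := by
  have h1 : Run' (0, ![1 + a, 1, c + 1, k]) (0, ![1, 1 + 2 * a, c + 1, k]) :=
    runL1 a 1 1 (c + 1) k (by omega) (by omega) hk
  have h2 : Run' (2, ![1, 1 + 2 * a, c + 1, k]) (2, ![1 + 2 * a, 1, c + 1, k]) :=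
    runL2 (2 * a) 1 1 (c + 1) k (by omega) (by omega) hk
  have h3 : Step ((0 : Fin 4), ![1, 1 + 2 * a, c + 1, k]) (2, ![1, 1 + 2 * a, c + 1, k]) :=
    step3 (by omega) (by omega) (by omega) hk
  have h4 : Step ((2 : Fin 4), ![1 + 2 * a, 1, c + 1, k]) (0, ![1 + 2 * a, 1, c, k]) :=
    step4 (by omega) (by omega) hc hk
  exact (((h1.trans (Run'.single h3)).trans h2).trans (Run'.single h4)).cast
    (confEq 0 (by ring) rfl rfl rfl) (confEq 0 (by ring) rfl rfl rfl)

/-- Phase consuming counter 3 down to 1 while repeatedly doubling counter 1. -/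
lemma runPhase3 : ∀ c a k : ℕ, 0 < k →
    Run' (0, ![a + 1, 1, c + 1, k]) (0, ![2 ^ c * a + 1, 1, 1, k]) := by
  intro c
  induction c with
  | zero =>
    intro a k _
    exact (Run'.refl _).cast rfl (confEq 0 (by ring) rfl rfl rfl)
  | succ c ih =>
    intro a k hk
    have h1 := runDbl a (c + 1) k (by omega) hk
    have h2 := ih (2 * a) k hk
    exact (h1.trans h2).cast rfl (confEq 0 (by ring) rfl rfl rfl)

def G (a : ℕ) : ℕ := 2 ^ (2 * a) * (2 * a)

/-- One mega phase: consumes one unit of counter 4, value a+1 → G a + 1. -/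
lemma runMega (a k : ℕ) (hk : 0 < k) :
    Run' (0, ![a + 1, 1, 1, k + 1]) (0, ![G a + 1, 1, 1, k]) := by
  have h1 : Run' (0, ![1 + a, 1, 1, k + 1]) (0, ![1, 1 + 2 * a, 1, k + 1]) :=
    runL1 a 1 1 1 (k + 1) (by omega) (by omega) (by omega)
  have h2 : Step ((0 : Fin 4), ![1, 1 + 2 * a, 1, k + 1]) (3, ![1, 1 + 2 * a, 1, k + 1]) :=
    step6 (by omega) (by omega) (by omega) (by omega)
  have h3 : Run' (3, ![1, 1 + 2 * a, 1, k + 1]) (3, ![1 + 2 * a, 1, 1 + 2 * a, k + 1]) :=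
    runL3 (2 * a) 1 1 1 (k + 1) (by omega) (by omega) (by omega)
  have h4 : Step ((3 : Fin 4), ![1 + 2 * a, 1, 1 + 2 * a, k + 1])
      (0, ![1 + 2 * a, 1, 1 + 2 * a, k]) :=
    step7 (by omega) (by omega) (by omega) hk
  have h5 : Run' (0, ![2 * a + 1, 1, 2 * a + 1, k]) (0, ![2 ^ (2 * a) * (2 * a) + 1, 1, 1, k]) :=
    runPhase3 (2 * a) (2 * a) k hk
  exact ((((h1.trans (Run'.single h2)).trans h3).trans (Run'.single h4)).trans
    (h5.cast (confEq 0 (by ring) rfl (by ring) rfl) rfl)).cast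
    (confEq 0 (by ring) rfl rfl rfl) rfl

/-- Iterated mega phases. -/
lemma runMegas : ∀ j a k : ℕ, 0 < k →
    Run' (0, ![a + 1, 1, 1, k + j]) (0, ![G^[j] a + 1, 1, 1, k]) := by
  intro j
  induction j with
  | zero => intro a k _; simp only [Function.iterate_zero_apply]; exact Run'.refl _
  | succ j ih =>
    intro a k hk
    have h1 : Run' (0, ![a + 1, 1, 1, (k + j) + 1]) (0, ![G a + 1, 1, 1, k + j]) :=
      runMega a (k + j) (by omega)
    have h2 := ih (G a) k hk
    rw [Function.iterate_succ_apply]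
    exact (h1.cast (confEq 0 rfl rfl rfl (by ring)) rfl).trans h2

end Stmt18Aux
namespace Stmt18Aux

lemma incA : (![1, -1, 0, 0] : Fin 4 → ℤ) ∈ A18.Inc := by
  refine ⟨1, fun _ => 2, fun _ => ![1, -1, 0, 0], ⟨⟨le_rfl, ?_⟩, rfl, ?_⟩, ?_⟩
  · intro i hi
    simp only [A18, Set.mem_insert_iff, Set.mem_singleton_iff]
    tauto
  · simp [Nat.card_eq_fintype_card]
  · funext i; simp [VASS.eff]

lemma incB : (![-1, 2, 0, 0] : Fin 4 → ℤ) ∈ A18.Inc := by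
  refine ⟨2, fun i => if i % 2 = 0 then 0 else 1,
    fun i => if i % 2 = 0 then ![-1, 1, 0, 0] else ![0, 1, 0, 0], ⟨⟨by omega, ?_⟩, rfl, ?_⟩, ?_⟩
  · intro i hi
    interval_cases i <;>
      (simp only [A18, Set.mem_insert_iff, Set.mem_singleton_iff]; norm_num)
  · simp [Nat.card_eq_fintype_card]
  · funext i
    fin_cases i <;> simp [VASS.eff, Finset.sum_range_succ]

lemma part1 : ¬ ∃ nv ∈ A18.Normals, ∀ i, 0 < nv i := by
  rintro ⟨nv, ⟨-, hle⟩, hpos⟩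
  have h1 := hle _ incA
  have h2 := hle _ incB
  have hp := hpos 1
  simp only [VASS.dotZ, Fin.sum_univ_four] at h1 h2
  norm_num at h1 h2
  simp [Matrix.cons_val] at h1 h2
  linarith

lemma part2 : ∃ nv ∈ A18.Normals, ∀ i, 0 ≤ nv i := by
  refine ⟨fun j => if j = 3 then 1 else 0, ⟨?_, ?_⟩, ?_⟩
  · intro h
    have := congrFun h 3
    norm_num at this
  · rintro v ⟨nn, p, u, hsc, rfl⟩
    have hcomp : VASS.eff nn u 3 ≤ 0 := by
      apply Finset.sum_nonpos
      intro j hj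
      have hm := hsc.1.2 j (Finset.mem_range.1 hj)
      simp only [A18, Set.mem_insert_iff, Set.mem_singleton_iff] at hm
      rcases hm with h | h | h | h | h | h | h | h <;>
        (have h2 := congrArg (fun t => t.2.1 3) h; simp at h2; omega)
    simp only [VASS.dotZ, Fin.sum_univ_four, if_neg (by decide : ¬(0 : Fin 4) = 3),
      if_neg (by decide : ¬(1 : Fin 4) = 3), if_neg (by decide : ¬(2 : Fin 4) = 3), if_pos rfl]
    have : (VASS.eff nn u 3 : ℝ) ≤ 0 := by exact_mod_cast hcomp
    simpa using this
  · intro i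
    dsimp only
    split <;> norm_num

end Stmt18Aux
namespace Stmt18Aux

lemma tow_ge (k n : ℕ) : n ≤ Tow k n := by
  induction k with
  | zero => exact le_rfl
  | succ k ih =>
    have := Nat.lt_two_pow_self (n := Tow k n)
    calc n ≤ Tow k n := ih
    _ ≤ 2 ^ Tow k n := this.le
    _ = Tow (k + 1) n := rfl

lemma G_ge (x : ℕ) (hx : 1 ≤ x) : 2 ^ x ≤ G x := by
  calc 2 ^ x = 2 ^ x * 1 := by ring
  _ ≤ 2 ^ (2 * x) * (2 * x) :=
      Nat.mul_le_mul (Nat.pow_le_pow_right (by norm_num) (by omega)) (by omega)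
  _ = G x := rfl

lemma a0_big (m : ℕ) : 2 ^ (m + 6) + 2 * (m + 6) ≤ 2 ^ (m + 4) * (2 * m + 10) := by
  have h16 : 16 ≤ 2 ^ (m + 4) := by
    calc (16 : ℕ) = 2 ^ 4 := by norm_num
    _ ≤ 2 ^ (m + 4) := Nat.pow_le_pow_right (by norm_num) (by omega)
  have he : 2 ^ (m + 6) = 2 ^ (m + 4) * 4 := by
    have e : m + 6 = (m + 4) + 2 := by omega
    rw [e, pow_add]; norm_num
  nlinarith [h16]

lemma key (m : ℕ) : ∀ j, 2 * (m + 6) * Tow (j + 2) (m + 6) ≤ G^[j + 1] (2 ^ (m + 4) * (2 * m + 10)) := by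
  set n := m + 6 with hn
  set a0 := 2 ^ (m + 4) * (2 * m + 10) with ha0
  have hbase : 2 ^ n + 2 * n ≤ a0 := a0_big m
  have hmono : ∀ x y : ℕ, x ≤ y → (2 : ℕ) ^ x ≤ 2 ^ y := fun x y h =>
    Nat.pow_le_pow_right (by norm_num) h
  have hstep : ∀ b t : ℕ, 2 ≤ t → 2 * n * t ≤ b → 2 * n * 2 ^ t ≤ G b := by
    intro b t ht hb
    have h1 : 2 * n + t ≤ 2 * n * t := by nlinarith
    have hb1 : 1 ≤ b := le_trans (by nlinarith) hb
    calc 2 * n * 2 ^ t ≤ 2 ^ (2 * n) * 2 ^ t :=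
          Nat.mul_le_mul_right _ (Nat.lt_two_pow_self (n := 2 * n)).le
    _ = 2 ^ (2 * n + t) := (pow_add 2 (2 * n) t).symm
    _ ≤ 2 ^ (2 * n * t) := hmono _ _ h1
    _ ≤ 2 ^ b := hmono _ _ hb
    _ ≤ G b := G_ge b hb1
  intro j
  induction j with
  | zero =>
    have ht : Tow 2 n = 2 ^ (2 ^ n) := rfl
    have h1 : 1 ≤ a0 := le_trans Nat.one_le_two_pow (le_trans (Nat.le_add_right (2 ^ n) (2 * n)) hbase)
    calc 2 * n * Tow 2 n = 2 * n * 2 ^ (2 ^ n) := by rw [ht]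
    _ ≤ 2 ^ (2 * n) * 2 ^ (2 ^ n) := Nat.mul_le_mul_right _ (Nat.lt_two_pow_self (n := 2 * n)).le
    _ = 2 ^ (2 * n + 2 ^ n) := (pow_add _ _ _).symm
    _ ≤ 2 ^ a0 := hmono _ _ (by omega)
    _ ≤ G a0 := G_ge a0 h1
    _ = G^[0 + 1] a0 := rfl
  | succ j ih =>
    have ht2 : 2 ≤ Tow (j + 2) n := le_trans (by omega) (tow_ge (j + 2) n)
    have := hstep (G^[j + 1] a0) (Tow (j + 2) n) ht2 ih
    calc 2 * n * Tow (j + 1 + 2) n = 2 * n * 2 ^ Tow (j + 2) n := rfl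
    _ ≤ G (G^[j + 1] a0) := this
    _ = G^[j + 1 + 1] a0 := (Function.iterate_succ_apply' G (j + 1) a0).symm

/-- The complete long run. -/
lemma runWhole (m : ℕ) :
    Run' (0, fun _ => (m + 6 : ℕ))
      (0, ![G^[m + 5] (2 ^ (m + 4) * (2 * m + 10)) + 1, 1, 1, 1]) := by
  have e0 : ((0 : Fin 4), fun _ => (m + 6 : ℕ)) = ((0 : Fin 4), ![m + 6, m + 6, m + 6, m + 6]) := by
    refine Prod.ext rfl (funext fun j => ?_)
    fin_cases j <;> rfl
  rw [e0]
  have r1 : Step ((0 : Fin 4), ![m + 6, m + 6, m + 6, m + 6]) (2, ![m + 6, m + 6, m + 6, m + 6]) :=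
    step3 (by omega) (by omega) (by omega) (by omega)
  have r2 : Run' (2, ![m + 6, m + 6, m + 6, m + 6]) (2, ![2 * m + 11, 1, m + 6, m + 6]) :=
    (runL2 (m + 5) (m + 6) 1 (m + 6) (m + 6) (by omega) (by omega) (by omega)).cast
      (confEq 2 rfl (by omega) rfl rfl) (confEq 2 (by omega) rfl rfl rfl)
  have r3 : Step ((2 : Fin 4), ![2 * m + 11, 1, m + 6, m + 6]) (0, ![2 * m + 11, 1, m + 5, m + 6]) := by
    have := step4 (a := 2 * m + 11) (b := 1) (c := m + 5) (k := m + 6)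
      (by omega) (by omega) (by omega) (by omega)
    simpa using this
  have r4 : Run' (0, ![2 * m + 11, 1, m + 5, m + 6])
      (0, ![2 ^ (m + 4) * (2 * m + 10) + 1, 1, 1, m + 6]) :=
    (runPhase3 (m + 4) (2 * m + 10) (m + 6) (by omega)).cast
      (confEq 0 (by omega) rfl (by omega) rfl) rfl
  have r5 : Run' (0, ![2 ^ (m + 4) * (2 * m + 10) + 1, 1, 1, m + 6])
      (0, ![G^[m + 5] (2 ^ (m + 4) * (2 * m + 10)) + 1, 1, 1, 1]) :=
    (runMegas (m + 5) (2 ^ (m + 4) * (2 * m + 10)) 1 (by omega)).cast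
      (confEq 0 rfl rfl rfl (by omega)) rfl
  exact (((Run'.single r1).trans r2).trans (Run'.single r3)).trans (r4.trans r5)

end Stmt18Aux
/-- the VASS `A18` satisfies condition (D) and has non-elementary
termination complexity: for all sufficiently large `n` there is a zero-avoiding
computation from `q₁(n,n,n,n)` of length at least `n · Tow n n`; in particular
`𝓛(n) ≥ n · Tow n n` for all sufficiently large `n`. -/
theorem stmt18 :
    (¬ ∃ nv ∈ A18.Normals, ∀ i, 0 < nv i) ∧
    (∃ nv ∈ A18.Normals, ∀ i, 0 ≤ nv i) ∧
    (∃ N : ℕ, ∀ n : ℕ, N ≤ n →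
      (∃ (len : ℕ) (q : ℕ → Fin 4) (z : ℕ → Fin 4 → ℕ),
        q 0 = 0 ∧ z 0 = (fun _ => n) ∧ A18.IsZeroAvoiding len q z ∧
        n * Tow n n ≤ len) ∧
      ((n * Tow n n : ℕ) : ℕ∞) ≤ A18.L n) := by
  refine ⟨Stmt18Aux.part1, Stmt18Aux.part2, 6, ?_⟩
  intro n hn
  obtain ⟨m, rfl⟩ : ∃ m, n = m + 6 := ⟨n - 6, by omega⟩
  set n := m + 6 with hn'
  set M := Stmt18Aux.G^[m + 5] (2 ^ (m + 4) * (2 * m + 10)) with hM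
  -- the long run
  obtain ⟨len, f, hf0, hflen, hsteps⟩ := Stmt18Aux.runWhole m
  -- arithmetic bound
  have hkey : 2 * n * Tow n n ≤ M := by
    have := Stmt18Aux.key m (m + 4)
    exact this
  -- length bound
  have hcount : (f len).2 0 ≤ (f 0).2 0 + len := Stmt18Aux.run_counter0 ⟨f, rfl, rfl, hsteps⟩
  have hstart0 : (f 0).2 0 = n := by rw [hf0]
  have hend0 : (f len).2 0 = M + 1 := by rw [hflen]; rfl
  have hlenge : n * Tow n n ≤ len := by
    have h1 : n ≤ n * Tow n n := Nat.le_mul_of_pos_right n (by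
      have := Stmt18Aux.tow_ge n n; omega)
    have h2 : 2 * n * Tow n n = 2 * (n * Tow n n) := by ring
    rw [h2] at hkey
    omega
  -- the zero-avoiding computation
  have hza : A18.IsZeroAvoiding len (fun i => (f i).1) (fun i => (f i).2) := by
    constructor
    · intro i hi j
      cases i with
      | zero => simp [hf0]
      | succ i => exact (hsteps i (by omega)).1 j
    · intro i hi
      exact (hsteps i hi).2
  have hwit : ∃ q z, q 0 = (0 : Fin 4) ∧ z 0 = (fun _ => n) ∧ A18.IsZeroAvoiding len q z :=
    ⟨fun i => (f i).1, fun i => (f i).2, by simp [hf0], by simp [hf0, hn'], hza⟩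
  refine ⟨⟨len, fun i => (f i).1, fun i => (f i).2, by simp [hf0], by simp [hf0, hn'], hza, hlenge⟩, ?_⟩
  -- the bound on 𝓛
  have hle1 : ((n * Tow n n : ℕ) : ℕ∞) ≤ (len : ℕ∞) := by exact_mod_cast hlenge
  have hle2 : (len : ℕ∞) ≤ A18.Lval 0 (fun _ => n) := by
    refine le_iSup_of_le len ?_
    rw [iSup_pos hwit]
  have hsup : Finset.univ.sup (fun _ : Fin 4 => n) = n :=
    Finset.sup_const Finset.univ_nonempty n
  have hle3 : A18.Lval 0 (fun _ => n) ≤ A18.L n := by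
    refine le_iSup_of_le (0 : Fin 4) (le_iSup_of_le (fun _ => n) ?_)
    rw [iSup_pos hsup]
  exact hle1.trans (hle2.trans hle3)
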